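/- Let X = θμ + g^(θ) as in the allometric extension mixture model (θ Rademacher independent of g^(1) ~ N(0,Σ₁), g^(−1) ~ N(0,Σ₂)). Then X is sub-gaussian: with K = sqrt(32/(4 − e)), for every x ∈ ℝⁿ one has ‖⟨X, x⟩‖_{ψ₂} ≤ K ‖⟨X, x⟩‖_{L²}, where ‖Y‖_{ψ₂} = inf{t > 0 : E[exp(Y²/t²)] ≤ 2}. -/

import Mathlib

open MeasureTheory ProbabilityTheory Matrix Real
open scoped NNReal ENNReal

section SGAux

lemma sg_integrable_dirac {f : ℝ → ℝ} (hf : Measurable f) (a : ℝ) :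
    Integrable f (Measure.dirac a) := by
  refine ⟨hf.aestronglyMeasurable, ?_⟩
  simp only [HasFiniteIntegral, lintegral_dirac]
  exact ENNReal.coe_lt_top

lemma sg_gauss_integral_eq {v : ℝ≥0} (hv : v ≠ 0) (f : ℝ → ℝ) :
    ∫ z, f z ∂(gaussianReal 0 v) = ∫ z, f z * gaussianPDFReal 0 v z := by
  rw [gaussianReal_of_var_ne_zero _ hv]
  have h : (gaussianPDF 0 v) = fun x => ((Real.toNNReal (gaussianPDFReal 0 v x) : ℝ≥0) : ℝ≥0∞) :=
    rfl
  rw [h, integral_withDensity_eq_integral_smul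
    (measurable_gaussianPDFReal 0 v).real_toNNReal f]
  congr 1; ext z
  simp [NNReal.smul_def, Real.coe_toNNReal _ (gaussianPDFReal_nonneg 0 v z), mul_comm]

lemma sg_gauss_integrable_iff {v : ℝ≥0} (hv : v ≠ 0) {f : ℝ → ℝ} :
    Integrable f (gaussianReal 0 v)
      ↔ Integrable (fun z => f z * gaussianPDFReal 0 v z) volume := by
  rw [gaussianReal_of_var_ne_zero _ hv,
    integrable_withDensity_iff (measurable_gaussianPDF 0 v)
      (Filter.Eventually.of_forall fun x => ENNReal.ofReal_lt_top)]
  have h : (fun x => f x * (gaussianPDF 0 v x).toReal)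
      = fun z => f z * gaussianPDFReal 0 v z := by
    funext z
    rw [gaussianPDF, ENNReal.toReal_ofReal (gaussianPDFReal_nonneg 0 v z)]
  rw [h]

lemma sg_exp_gauss (v : ℝ≥0) (c : ℝ) (h : 2 * c * (v : ℝ) < 1) :
    Integrable (fun z => rexp (c * z ^ 2)) (gaussianReal 0 v) ∧
    ∫ z, rexp (c * z ^ 2) ∂(gaussianReal 0 v) = (Real.sqrt (1 - 2 * c * v))⁻¹ := by
  by_cases hv : v = 0
  · subst hv
    simp only [gaussianReal_zero_var, NNReal.coe_zero, mul_zero, sub_zero, Real.sqrt_one,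
      inv_one]
    refine ⟨sg_integrable_dirac (by fun_prop) 0, ?_⟩
    rw [integral_dirac]
    norm_num
  · have hv0 : (0 : ℝ) < v := lt_of_le_of_ne v.coe_nonneg (by exact_mod_cast Ne.symm hv)
    set b : ℝ := 1 / (2 * v) - c with hb
    have hbpos : 0 < b := by
      rw [hb, sub_pos, lt_div_iff₀ (by positivity)]
      linarith
    have h2vb : 2 * (v : ℝ) * b = 1 - 2 * c * v := by
      rw [hb, mul_sub, mul_one_div_cancel (by positivity)]
      ring
    have hpt : ∀ z : ℝ, rexp (c * z ^ 2) * gaussianPDFReal 0 v z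
        = (Real.sqrt (2 * π * v))⁻¹ * rexp (-b * z ^ 2) := by
      intro z
      rw [gaussianPDFReal]
      rw [mul_left_comm, ← Real.exp_add]
      congr 2
      rw [hb]
      field_simp [hv0.ne']
      ring
    have hig : Integrable (fun z => rexp (c * z ^ 2) * gaussianPDFReal 0 v z) volume := by
      simp only [hpt]
      exact (integrable_exp_neg_mul_sq hbpos).const_mul _
    refine ⟨(sg_gauss_integrable_iff hv).mpr hig, ?_⟩
    rw [sg_gauss_integral_eq hv]
    calc ∫ z, rexp (c * z ^ 2) * gaussianPDFReal 0 v z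
        = ∫ z, (Real.sqrt (2 * π * v))⁻¹ * rexp (-b * z ^ 2) := by simp only [hpt]
      _ = (Real.sqrt (2 * π * v))⁻¹ * Real.sqrt (π / b) := by
          rw [integral_const_mul, integral_gaussian]
      _ = (Real.sqrt (1 - 2 * c * v))⁻¹ := by
          rw [← Real.sqrt_inv, ← Real.sqrt_mul (by positivity)]
          rw [← Real.sqrt_inv]
          congr 1
          rw [← h2vb]
          field_simp

lemma sg_moments (v : ℝ≥0) :
    Integrable (fun z : ℝ => z) (gaussianReal 0 v) ∧
    Integrable (fun z : ℝ => z ^ 2) (gaussianReal 0 v) ∧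
    (∫ z, z ∂(gaussianReal 0 v)) = 0 ∧
    (v : ℝ) / 2 ≤ ∫ z, z ^ 2 ∂(gaussianReal 0 v) := by
  by_cases hv : v = 0
  · subst hv
    simp only [gaussianReal_zero_var, NNReal.coe_zero]
    refine ⟨sg_integrable_dirac measurable_id 0, sg_integrable_dirac (by fun_prop) 0, ?_, ?_⟩ <;>
      rw [integral_dirac] <;> norm_num
  · have hv0 : (0 : ℝ) < v := lt_of_le_of_ne v.coe_nonneg (by exact_mod_cast Ne.symm hv)
    set b : ℝ := 1 / (2 * v) with hbdef
    have hbpos : 0 < b := by positivity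
    have hpdf : ∀ z : ℝ, gaussianPDFReal 0 v z
        = (Real.sqrt (2 * π * v))⁻¹ * rexp (-b * z ^ 2) := by
      intro z
      rw [gaussianPDFReal]
      congr 1
      rw [hbdef]
      congr 1
      field_simp
      simp
    -- integrability of z
    have hint1 : Integrable (fun z : ℝ => z) (gaussianReal 0 v) := by
      rw [sg_gauss_integrable_iff hv]
      have : (fun z : ℝ => z * gaussianPDFReal 0 v z)
          = fun z => (Real.sqrt (2 * π * v))⁻¹ * (z * rexp (-b * z ^ 2)) := by
        funext z; rw [hpdf z]; ring
      rw [this]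
      exact (integrable_mul_exp_neg_mul_sq hbpos).const_mul _
    -- integrability of z^2
    have hrpow : ∀ z : ℝ, z ^ (2 : ℝ) = z ^ 2 := fun z => by
      rw [show (2 : ℝ) = ((2 : ℕ) : ℝ) by norm_num, Real.rpow_natCast]
    have hint2 : Integrable (fun z : ℝ => z ^ 2) (gaussianReal 0 v) := by
      rw [sg_gauss_integrable_iff hv]
      have : (fun z : ℝ => z ^ 2 * gaussianPDFReal 0 v z)
          = fun z => (Real.sqrt (2 * π * v))⁻¹ * (z ^ (2:ℝ) * rexp (-b * z ^ 2)) := by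
        funext z; rw [hpdf z, hrpow z]; ring
      rw [this]
      exact (integrable_rpow_mul_exp_neg_mul_sq hbpos (by norm_num)).const_mul _
    -- first moment zero
    have hmean : (∫ z, z ∂(gaussianReal 0 v)) = 0 := by
      rw [sg_gauss_integral_eq hv]
      set g : ℝ → ℝ := fun z => z * gaussianPDFReal 0 v z with hg
      have hpdf_even : ∀ z : ℝ, gaussianPDFReal 0 v (-z) = gaussianPDFReal 0 v z := by
        intro z; simp [gaussianPDFReal, neg_sq]
      have hodd : ∀ z : ℝ, g (-z) = - g z := by
        intro z; simp only [hg, hpdf_even z]; ring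
      have hsub : ∫ z, g z = ∫ z, g (-z) := by
        conv_lhs => rw [← Measure.map_neg_eq_self (volume : Measure ℝ)]
        exact MeasurableEmbedding.integral_map (Homeomorph.neg ℝ).measurableEmbedding g
      have : ∫ z, g z = - ∫ z, g z := by
        nth_rewrite 1 [hsub]
        simp only [hodd]
        exact integral_neg g
      linarith
    refine ⟨hint1, hint2, hmean, ?_⟩
    -- second moment lower bound
    obtain ⟨hie, hve⟩ := sg_exp_gauss v (-b) (by nlinarith)
    have hmono : ∫ z, (1 - b * z ^ 2) ∂(gaussianReal 0 v)
        ≤ ∫ z, rexp (-b * z ^ 2) ∂(gaussianReal 0 v) := by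
      apply integral_mono ((integrable_const (1:ℝ)).sub (hint2.const_mul b)) ?_ ?_
      · have : (fun z : ℝ => rexp (-b * z ^ 2)) = fun z => rexp ((-b) * z ^ 2) := by
          funext z; ring_nf
        rw [this]; exact hie
      · intro z
        have := Real.add_one_le_exp (-b * z ^ 2)
        simp only [Pi.sub_apply]
        calc (1:ℝ) - b * z ^ 2 = -b * z ^ 2 + 1 := by ring
          _ ≤ rexp (-b * z ^ 2) := this
    have hL : ∫ z, (1 - b * z ^ 2) ∂(gaussianReal 0 v)
        = 1 - b * ∫ z, z ^ 2 ∂(gaussianReal 0 v) := by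
      rw [integral_sub (integrable_const _) (hint2.const_mul b), integral_const,
        integral_const_mul]
      simp
    have hR : ∫ z, rexp (-b * z ^ 2) ∂(gaussianReal 0 v) = (Real.sqrt 2)⁻¹ := by
      have h2 : 1 - 2 * (-b) * (v:ℝ) = 2 := by
        rw [hbdef]; field_simp
        norm_num
      have := (sg_exp_gauss v (-b) (by nlinarith)).2
      rw [h2] at this
      exact this
    set J := ∫ z, z ^ 2 ∂(gaussianReal 0 v) with hJ
    have hkey : 1 - b * J ≤ (Real.sqrt 2)⁻¹ := by rw [← hL, ← hR]; exact hmono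
    have hsq2 : (4/3 : ℝ) ≤ Real.sqrt 2 := by
      nlinarith [Real.sq_sqrt (show (0:ℝ) ≤ 2 by norm_num), Real.sqrt_nonneg 2]
    have hinv : (Real.sqrt 2)⁻¹ ≤ 3/4 := by
      rw [inv_le_comm₀ (by positivity) (by norm_num)]
      linarith
    have hbJ : 1/4 ≤ b * J := by
      have := hkey.trans hinv
      linarith
    have h5 : (1/4 : ℝ) * (2 * v) ≤ (b * J) * (2 * v) :=
      mul_le_mul_of_nonneg_right hbJ (by positivity)
    have hbv : (b * J) * (2 * v) = J := by
      rw [hbdef]; field_simp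
    nlinarith

lemma sg_shift (m : ℝ) (v : ℝ≥0) :
    Integrable (fun z => (m + z) ^ 2) (gaussianReal 0 v) ∧
    ∫ z, (m + z) ^ 2 ∂(gaussianReal 0 v) = m ^ 2 + ∫ z, z ^ 2 ∂(gaussianReal 0 v) := by
  obtain ⟨h1, h2, h3, _⟩ := sg_moments v
  have hfun : (fun z : ℝ => (m + z) ^ 2) = fun z => (m ^ 2 + 2 * m * z) + z ^ 2 := by
    funext z; ring
  have ha : Integrable (fun z : ℝ => m ^ 2 + 2 * m * z) (gaussianReal 0 v) :=
    (integrable_const _).add (h1.const_mul _)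
  have hb : Integrable (fun z : ℝ => 2 * m * z) (gaussianReal 0 v) := h1.const_mul _
  constructor
  · rw [hfun]; exact ha.add h2
  · rw [hfun, integral_add ha h2, integral_add (integrable_const _) hb, integral_const,
      integral_const_mul, h3]
    simp

lemma sg_fracv {E σ2 t v : ℝ} (h4E : 0 < 4 - E) (hσpos : 0 < σ2)
    (ht2 : t ^ 2 = 32 / (4 - E) * σ2) (hv0 : 0 ≤ v) (hv4 : v ≤ 4 * σ2) :
    2 * (2 / t ^ 2) * v ≤ (4 - E) / 2 := by
  have heq : 2 * (2 / t ^ 2) * v = v * (4 - E) / (8 * σ2) := by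
    rw [ht2]; field_simp; ring
  rw [heq, div_le_div_iff₀ (by positivity) (by norm_num)]
  nlinarith

lemma sg_fraca {E σ2 t a : ℝ} (h4E : 0 < 4 - E) (hσpos : 0 < σ2)
    (ht2 : t ^ 2 = 32 / (4 - E) * σ2) (ha : a ^ 2 ≤ σ2) :
    2 * a ^ 2 / t ^ 2 ≤ (4 - E) / 16 := by
  have heq : 2 * a ^ 2 / t ^ 2 = a ^ 2 * (4 - E) / (16 * σ2) := by
    rw [ht2]; field_simp; ring
  rw [heq, div_le_div_iff₀ (by positivity) (by norm_num)]
  nlinarith [sq_nonneg a]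

lemma sg_bnd {t : ℝ} (ht2pos : 0 < t ^ 2) (a z : ℝ) :
    Real.exp ((a + z) ^ 2 / t ^ 2)
      ≤ Real.exp (2 * a ^ 2 / t ^ 2) * Real.exp (2 / t ^ 2 * z ^ 2) := by
  rw [← Real.exp_add]
  apply Real.exp_le_exp.mpr
  have h1 : (a + z) ^ 2 ≤ 2 * a ^ 2 + 2 * z ^ 2 := by nlinarith [sq_nonneg (a - z)]
  calc (a + z) ^ 2 / t ^ 2 ≤ (2 * a ^ 2 + 2 * z ^ 2) / t ^ 2 := by
        apply div_le_div_of_nonneg_right h1 ht2pos.le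
    _ = 2 * a ^ 2 / t ^ 2 + 2 / t ^ 2 * z ^ 2 := by ring

lemma sg_final {E σ2 t a v : ℝ} (hE1 : E < 2.7182818286) (hE2 : 2.7182818283 < E)
    (hσpos : 0 < σ2) (ht2 : t ^ 2 = 32 / (4 - E) * σ2) (ha : a ^ 2 ≤ σ2)
    (hv0 : 0 ≤ v) (hv4 : v ≤ 4 * σ2) :
    Real.exp (2 * a ^ 2 / t ^ 2) * (Real.sqrt (1 - 2 * (2 / t ^ 2) * v))⁻¹ ≤ 2 := by
  have h4E : 0 < 4 - E := by linarith
  have hu := sg_fraca h4E hσpos ht2 ha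
  have hexp_le : rexp (2 * a ^ 2 / t ^ 2) ≤ 1.09 := by
    have h1 : rexp (2 * a ^ 2 / t ^ 2) ≤ rexp ((4 - E) / 16) := Real.exp_le_exp.mpr hu
    have h2 : rexp ((4 - E) / 16) * rexp (-((4 - E) / 16)) = 1 := by
      rw [← Real.exp_add]; simp
    have h3 : 1 - (4 - E) / 16 ≤ rexp (-((4 - E) / 16)) := by
      have := Real.add_one_le_exp (-((4 - E) / 16)); linarith
    have h4 : (0.9 : ℝ) < 1 - (4 - E) / 16 := by linarith
    have h5 : rexp ((4 - E) / 16) ≤ (1 - (4 - E) / 16)⁻¹ := by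
      have hh := mul_le_mul_of_nonneg_left h3 (Real.exp_pos ((4 - E) / 16)).le
      rw [h2] at hh
      rw [inv_eq_one_div, le_div_iff₀ (by linarith)]
      linarith
    have h6 : (1 - (4 - E) / 16)⁻¹ ≤ 1.09 := by
      rw [inv_le_comm₀ (by linarith) (by norm_num)]
      nlinarith
    linarith
  have hDlb : (0.3481 : ℝ) ≤ 1 - 2 * (2 / t ^ 2) * v := by
    have := sg_fracv h4E hσpos ht2 hv0 hv4
    nlinarith
  have hsqrtD : (0.59 : ℝ) ≤ Real.sqrt (1 - 2 * (2 / t ^ 2) * v) := by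
    have h := Real.sqrt_le_sqrt hDlb
    rwa [show (0.3481 : ℝ) = 0.59 ^ 2 by norm_num, Real.sqrt_sq (by norm_num)] at h
  have hinvD : (Real.sqrt (1 - 2 * (2 / t ^ 2) * v))⁻¹ ≤ (0.59 : ℝ)⁻¹ :=
    inv_anti₀ (by norm_num) hsqrtD
  calc rexp (2 * a ^ 2 / t ^ 2) * (Real.sqrt (1 - 2 * (2 / t ^ 2) * v))⁻¹
      ≤ 1.09 * (0.59 : ℝ)⁻¹ := by
        apply mul_le_mul hexp_le hinvD (by positivity) (by norm_num)
    _ ≤ 2 := by norm_num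

end SGAux

/-- The sub-gaussian norm of a real random variable `Y` (w.r.t. `P`):
`inf {t > 0 : E[exp(Y²/t²)] ≤ 2}`. -/
noncomputable def subGaussianNorm {Ω : Type*} [MeasurableSpace Ω] (P : Measure Ω)
    (Y : Ω → ℝ) : ℝ :=
  sInf {t : ℝ | 0 < t ∧ ∫ ω, Real.exp (Y ω ^ 2 / t ^ 2) ∂P ≤ 2}

theorem stmt_8 {Ω : Type*} [MeasurableSpace Ω] (P : Measure Ω) [IsProbabilityMeasure P]
    {n : ℕ} (μ : Fin n → ℝ) (S₁ S₂ : Matrix (Fin n) (Fin n) ℝ)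
    (hS₁ : S₁.PosDef) (hS₂ : S₂.PosDef)
    (θ : Ω → ℝ) (hθmeas : Measurable θ)
    (hθ1 : P {ω | θ ω = 1} = 1/2) (hθ2 : P {ω | θ ω = -1} = 1/2)
    (g₁ g₂ : Ω → (Fin n → ℝ)) (hg₁meas : Measurable g₁) (hg₂meas : Measurable g₂)
    (hg₁ : ∀ x : Fin n → ℝ,
      Measure.map (fun ω => x ⬝ᵥ g₁ ω) P = gaussianReal 0 (Real.toNNReal (x ⬝ᵥ S₁.mulVec x)))
    (hg₂ : ∀ x : Fin n → ℝ,
      Measure.map (fun ω => x ⬝ᵥ g₂ ω) P = gaussianReal 0 (Real.toNNReal (x ⬝ᵥ S₂.mulVec x)))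
    (hindep : IndepFun θ (fun ω => (g₁ ω, g₂ ω)) P)
    (X : Ω → (Fin n → ℝ))
    (hX : ∀ ω, X ω = θ ω • μ + (if θ ω = 1 then g₁ ω else g₂ ω))
    (x : Fin n → ℝ) :
    subGaussianNorm P (fun ω => x ⬝ᵥ X ω)
      ≤ Real.sqrt (32 / (4 - Real.exp 1)) * Real.sqrt (∫ ω, (x ⬝ᵥ X ω) ^ 2 ∂P) := by
  classical
  by_cases hx : x = 0
  · subst hx
    have hY0 : ∀ ω, (0 : Fin n → ℝ) ⬝ᵥ X ω = 0 := fun ω => zero_dotProduct _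
    have h1 : subGaussianNorm P (fun ω => (0 : Fin n → ℝ) ⬝ᵥ X ω) = 0 := by
      unfold subGaussianNorm
      have hset : {t : ℝ | 0 < t ∧
          ∫ ω, Real.exp ((fun ω => (0 : Fin n → ℝ) ⬝ᵥ X ω) ω ^ 2 / t ^ 2) ∂P ≤ 2}
          = Set.Ioi 0 := by
        ext t
        simp [hY0]
      rw [hset]
      exact csInf_Ioi
    rw [h1]
    positivity
  -- main case
  · have hS₁pos : 0 < x ⬝ᵥ S₁.mulVec x := by simpa using hS₁.dotProduct_mulVec_pos hx
    have hS₂pos : 0 < x ⬝ᵥ S₂.mulVec x := by simpa using hS₂.dotProduct_mulVec_pos hx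
    set m : ℝ := x ⬝ᵥ μ with hmdef
    set v₁ : ℝ≥0 := Real.toNNReal (x ⬝ᵥ S₁.mulVec x) with hv₁def
    set v₂ : ℝ≥0 := Real.toNNReal (x ⬝ᵥ S₂.mulVec x) with hv₂def
    have hv₁ : (0:ℝ) < v₁ := by rw [hv₁def]; simpa using hS₁pos
    have hv₂ : (0:ℝ) < v₂ := by rw [hv₂def]; simpa using hS₂pos
    set Z₁ : Ω → ℝ := fun ω => x ⬝ᵥ g₁ ω with hZ₁def
    set Z₂ : Ω → ℝ := fun ω => x ⬝ᵥ g₂ ω with hZ₂def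
    have hZ₁meas : Measurable Z₁ :=
      Finset.measurable_sum _ fun i _ =>
        (measurable_const.mul ((measurable_pi_apply i).comp hg₁meas))
    have hZ₂meas : Measurable Z₂ :=
      Finset.measurable_sum _ fun i _ =>
        (measurable_const.mul ((measurable_pi_apply i).comp hg₂meas))
    have hYeq : ∀ ω, x ⬝ᵥ X ω = θ ω * m + (if θ ω = 1 then Z₁ ω else Z₂ ω) := by
      intro ω
      rw [hX ω, dotProduct_add, dotProduct_smul, smul_eq_mul, apply_ite (fun u => x ⬝ᵥ u)]
    -- the key mixing identity
    have key : ∀ F : ℝ → ℝ, Measurable F →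
        Integrable (fun z => F (m + z)) (gaussianReal 0 v₁) →
        Integrable (fun z => F (-m + z)) (gaussianReal 0 v₂) →
        (∫ ω, F (x ⬝ᵥ X ω) ∂P)
          = (∫ z, F (m + z) ∂(gaussianReal 0 v₁)) / 2
            + (∫ z, F (-m + z) ∂(gaussianReal 0 v₂)) / 2 := by
      intro F hF hi₁ hi₂
      set A : Set Ω := {ω | θ ω = 1} with hAdef
      set B : Set Ω := {ω | θ ω = -1} with hBdef
      have hAmeas : MeasurableSet A := hθmeas (measurableSet_singleton 1)
      have hBmeas : MeasurableSet B := hθmeas (measurableSet_singleton (-1))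
      have hdisj : Disjoint A B := by
        rw [Set.disjoint_left]
        intro ω h1 h2
        simp only [hAdef, hBdef, Set.mem_setOf_eq] at h1 h2
        rw [h1] at h2; norm_num at h2
      have hABfull : P (A ∪ B)ᶜ = 0 := by
        have hU : P (A ∪ B) = 1 := by
          rw [measure_union hdisj hBmeas, hθ1, hθ2]
          rw [ENNReal.div_add_div_same, one_add_one_eq_two]
          exact ENNReal.div_self two_ne_zero ENNReal.ofNat_ne_top
        rw [measure_compl (hAmeas.union hBmeas) (measure_ne_top _ _), hU, measure_univ]
        simp
      set f₁ : Ω → ℝ := fun ω => F (m + Z₁ ω) with hf₁def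
      set f₂ : Ω → ℝ := fun ω => F (-m + Z₂ ω) with hf₂def
      have hF₁meas : Measurable fun z : ℝ => F (m + z) :=
        hF.comp (measurable_const.add measurable_id)
      have hF₂meas : Measurable fun z : ℝ => F (-m + z) :=
        hF.comp (measurable_const.add measurable_id)
      have hint₁ : Integrable f₁ P := by
        have hmap : Integrable (fun z => F (m + z)) (Measure.map Z₁ P) := by
          rw [hZ₁def, hg₁ x]; exact hi₁
        exact (integrable_map_measure hF₁meas.aestronglyMeasurable hZ₁meas.aemeasurable).mp hmap
      have hint₂ : Integrable f₂ P := by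
        have hmap : Integrable (fun z => F (-m + z)) (Measure.map Z₂ P) := by
          rw [hZ₂def, hg₂ x]; exact hi₂
        exact (integrable_map_measure hF₂meas.aestronglyMeasurable hZ₂meas.aemeasurable).mp hmap
      -- a.e. decomposition
      have hae : (fun ω => F (x ⬝ᵥ X ω)) =ᵐ[P]
          fun ω => A.indicator (fun _ => (1:ℝ)) ω * f₁ ω
            + B.indicator (fun _ => (1:ℝ)) ω * f₂ ω := by
        have hmem : ∀ᵐ ω ∂P, ω ∈ A ∪ B := by
          rw [ae_iff]
          exact hABfull
        filter_upwards [hmem] with ω hω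
        rcases hω with hA | hB
        · have hθω : θ ω = 1 := hA
          have hnB : ω ∉ B := by
            simp only [hBdef, Set.mem_setOf_eq, hθω]; norm_num
          rw [Set.indicator_of_mem hA, Set.indicator_of_notMem hnB, hYeq ω, hθω]
          simp [hf₁def]
        · have hθω : θ ω = -1 := hB
          have hnA : ω ∉ A := by
            simp only [hAdef, Set.mem_setOf_eq, hθω]; norm_num
          rw [Set.indicator_of_mem hB, Set.indicator_of_notMem hnA, hYeq ω, hθω]
          norm_num [hf₂def]
      have hiA : Integrable (fun ω => A.indicator (fun _ => (1:ℝ)) ω * f₁ ω) P := by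
        have heq : (fun ω => A.indicator (fun _ => (1:ℝ)) ω * f₁ ω) = A.indicator f₁ := by
          funext ω
          by_cases h : ω ∈ A <;>
            simp [Set.indicator_of_mem, Set.indicator_of_notMem, h]
        rw [heq]; exact hint₁.indicator hAmeas
      have hiB : Integrable (fun ω => B.indicator (fun _ => (1:ℝ)) ω * f₂ ω) P := by
        have heq : (fun ω => B.indicator (fun _ => (1:ℝ)) ω * f₂ ω) = B.indicator f₂ := by
          funext ω
          by_cases h : ω ∈ B <;>
            simp [Set.indicator_of_mem, Set.indicator_of_notMem, h]
        rw [heq]; exact hint₂.indicator hBmeas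
      rw [integral_congr_ae hae, integral_add hiA hiB]
      -- independence
      have hindA : IndepFun (fun ω => A.indicator (fun _ => (1:ℝ)) ω) f₁ P := by
        have hφ : Measurable fun t : ℝ => ({(1:ℝ)} : Set ℝ).indicator (fun _ => (1:ℝ)) t :=
          measurable_const.indicator (measurableSet_singleton 1)
        have hψ : Measurable fun p : (Fin n → ℝ) × (Fin n → ℝ) => F (m + x ⬝ᵥ p.1) :=
          hF.comp (measurable_const.add
            ((Finset.measurable_sum _ fun i _ =>
              measurable_const.mul ((measurable_pi_apply i).comp measurable_fst))))
        have h := hindep.comp hφ hψ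
        have e1 : ((fun t : ℝ => ({(1:ℝ)} : Set ℝ).indicator (fun _ => (1:ℝ)) t) ∘ θ)
            = fun ω => A.indicator (fun _ => (1:ℝ)) ω := by
          funext ω
          by_cases hωA : ω ∈ A
          · have : θ ω = 1 := hωA
            simp [Function.comp, this, Set.indicator_of_mem, hωA]
          · have : θ ω ≠ 1 := hωA
            simp [Function.comp, Set.indicator_of_notMem, hωA, this]
        have e2 : ((fun p : (Fin n → ℝ) × (Fin n → ℝ) => F (m + x ⬝ᵥ p.1))
            ∘ (fun ω => (g₁ ω, g₂ ω))) = f₁ := rfl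
        rw [e1, e2] at h
        exact h
      have hindB : IndepFun (fun ω => B.indicator (fun _ => (1:ℝ)) ω) f₂ P := by
        have hφ : Measurable fun t : ℝ => ({(-1:ℝ)} : Set ℝ).indicator (fun _ => (1:ℝ)) t :=
          measurable_const.indicator (measurableSet_singleton (-1))
        have hψ : Measurable fun p : (Fin n → ℝ) × (Fin n → ℝ) => F (-m + x ⬝ᵥ p.2) :=
          hF.comp (measurable_const.add
            ((Finset.measurable_sum _ fun i _ =>
              measurable_const.mul ((measurable_pi_apply i).comp measurable_snd))))
        have h := hindep.comp hφ hψ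
        have e1 : ((fun t : ℝ => ({(-1:ℝ)} : Set ℝ).indicator (fun _ => (1:ℝ)) t) ∘ θ)
            = fun ω => B.indicator (fun _ => (1:ℝ)) ω := by
          funext ω
          by_cases hωB : ω ∈ B
          · have : θ ω = -1 := hωB
            simp [Function.comp, this, Set.indicator_of_mem, hωB]
          · have : θ ω ≠ -1 := hωB
            simp [Function.comp, Set.indicator_of_notMem, hωB, this]
        have e2 : ((fun p : (Fin n → ℝ) × (Fin n → ℝ) => F (-m + x ⬝ᵥ p.2))
            ∘ (fun ω => (g₁ ω, g₂ ω))) = f₂ := rfl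
        rw [e1, e2] at h
        exact h
      have hindicA : ∫ ω, A.indicator (fun _ => (1:ℝ)) ω ∂P = 1/2 := by
        rw [show (fun _ : Ω => (1:ℝ)) = (1 : Ω → ℝ) from rfl, integral_indicator_one hAmeas,
          measureReal_def, show P A = 1/2 from hθ1]
        simp [ENNReal.toReal_div]
      have hindicB : ∫ ω, B.indicator (fun _ => (1:ℝ)) ω ∂P = 1/2 := by
        rw [show (fun _ : Ω => (1:ℝ)) = (1 : Ω → ℝ) from rfl, integral_indicator_one hBmeas,
          measureReal_def, show P B = 1/2 from hθ2]
        simp [ENNReal.toReal_div]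
      have hmap₁ : ∫ ω, f₁ ω ∂P = ∫ z, F (m + z) ∂(gaussianReal 0 v₁) := by
        have h := integral_map (μ := P) hZ₁meas.aemeasurable
          (f := fun z => F (m + z)) hF₁meas.aestronglyMeasurable
        rw [hZ₁def, hg₁ x] at h
        rw [← h]
      have hmap₂ : ∫ ω, f₂ ω ∂P = ∫ z, F (-m + z) ∂(gaussianReal 0 v₂) := by
        have h := integral_map (μ := P) hZ₂meas.aemeasurable
          (f := fun z => F (-m + z)) hF₂meas.aestronglyMeasurable
        rw [hZ₂def, hg₂ x] at h
        rw [← h]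
      rw [hindA.integral_fun_mul_eq_mul_integral
          ((measurable_const.indicator hAmeas).aestronglyMeasurable)
          hint₁.aestronglyMeasurable,
        hindB.integral_fun_mul_eq_mul_integral
          ((measurable_const.indicator hBmeas).aestronglyMeasurable)
          hint₂.aestronglyMeasurable,
        hindicA, hindicB, hmap₁, hmap₂]
      ring
    -- moments
    obtain ⟨hid₁, hsq₁, hmean₁, hJ₁⟩ := sg_moments v₁
    obtain ⟨hid₂, hsq₂, hmean₂, hJ₂⟩ := sg_moments v₂
    obtain ⟨hsh₁i, hsh₁⟩ := sg_shift m v₁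
    obtain ⟨hsh₂i, hsh₂⟩ := sg_shift (-m) v₂
    set J₁ : ℝ := ∫ z, z ^ 2 ∂(gaussianReal 0 v₁) with hJ₁def
    set J₂ : ℝ := ∫ z, z ^ 2 ∂(gaussianReal 0 v₂) with hJ₂def
    set σ2 : ℝ := ∫ ω, (x ⬝ᵥ X ω) ^ 2 ∂P with hσ2def
    have hσeq : σ2 = m ^ 2 + (J₁ + J₂) / 2 := by
      rw [hσ2def, key (fun z => z ^ 2) (measurable_id.pow_const 2) hsh₁i hsh₂i, hsh₁, hsh₂]
      ring
    have hσpos : 0 < σ2 := by nlinarith [sq_nonneg m, hJ₁, hJ₂, hv₁, hv₂]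
    have hm2 : m ^ 2 ≤ σ2 := by nlinarith [hJ₁, hJ₂, hv₁.le, hv₂.le]
    have hv₁σ : (v₁ : ℝ) ≤ 4 * σ2 := by nlinarith [hJ₁, hJ₂, hv₂.le, sq_nonneg m]
    have hv₂σ : (v₂ : ℝ) ≤ 4 * σ2 := by nlinarith [hJ₁, hJ₂, hv₁.le, sq_nonneg m]
    -- numerics
    have hE1 : Real.exp 1 < 2.7182818286 := Real.exp_one_lt_d9
    have hE2 : 2.7182818283 < Real.exp 1 := Real.exp_one_gt_d9
    set E : ℝ := Real.exp 1 with hEdef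
    have h4E : 0 < 4 - E := by linarith
    have hKpos : (0 : ℝ) < 32 / (4 - E) := by positivity
    set K : ℝ := Real.sqrt (32 / (4 - E)) with hKdef
    have hK2 : K ^ 2 = 32 / (4 - E) := Real.sq_sqrt hKpos.le
    set s : ℝ := Real.sqrt σ2 with hsdef
    have hs2 : s ^ 2 = σ2 := Real.sq_sqrt hσpos.le
    set t : ℝ := K * s with htdef
    have htpos : 0 < t := mul_pos (Real.sqrt_pos.2 hKpos) (Real.sqrt_pos.2 hσpos)
    have ht2 : t ^ 2 = 32 / (4 - E) * σ2 := by rw [htdef, mul_pow, hK2, hs2]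
    have ht2pos : 0 < t ^ 2 := by positivity
    clear_value t s K σ2 J₁ J₂ E
    -- fraction bounds
    have hc₁ : 2 * (2 / t ^ 2) * (v₁ : ℝ) < 1 :=
      lt_of_le_of_lt (sg_fracv h4E hσpos ht2 hv₁.le hv₁σ) (by linarith)
    have hc₂ : 2 * (2 / t ^ 2) * (v₂ : ℝ) < 1 :=
      lt_of_le_of_lt (sg_fracv h4E hσpos ht2 hv₂.le hv₂σ) (by linarith)
    obtain ⟨hexpint₁, hexpval₁⟩ := sg_exp_gauss v₁ (2 / t ^ 2) hc₁
    obtain ⟨hexpint₂, hexpval₂⟩ := sg_exp_gauss v₂ (2 / t ^ 2) hc₂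
    have hFmeas : Measurable fun z : ℝ => rexp (z ^ 2 / t ^ 2) :=
      ((measurable_id.pow_const 2).div_const _).exp
    have hbnd : ∀ a z : ℝ, rexp ((a + z) ^ 2 / t ^ 2)
        ≤ rexp (2 * a ^ 2 / t ^ 2) * rexp (2 / t ^ 2 * z ^ 2) := sg_bnd ht2pos
    have hi₁' : Integrable (fun z => rexp ((m + z) ^ 2 / t ^ 2)) (gaussianReal 0 v₁) := by
      apply Integrable.mono' (hexpint₁.const_mul (rexp (2 * m ^ 2 / t ^ 2)))
        ((hFmeas.comp (measurable_const.add measurable_id)).aestronglyMeasurable)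
      refine Filter.Eventually.of_forall fun z => ?_
      simp only [Function.comp_apply, id_eq, Real.norm_eq_abs, Real.abs_exp]
      exact hbnd m z
    have hi₂' : Integrable (fun z => rexp ((-m + z) ^ 2 / t ^ 2)) (gaussianReal 0 v₂) := by
      apply Integrable.mono' (hexpint₂.const_mul (rexp (2 * (-m) ^ 2 / t ^ 2)))
        ((hFmeas.comp (measurable_const.add measurable_id)).aestronglyMeasurable)
      refine Filter.Eventually.of_forall fun z => ?_
      simp only [Function.comp_apply, id_eq, Real.norm_eq_abs, Real.abs_exp]
      exact hbnd (-m) z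
    have hIval₁ : ∫ z, rexp ((m + z) ^ 2 / t ^ 2) ∂(gaussianReal 0 v₁)
        ≤ rexp (2 * m ^ 2 / t ^ 2) * (Real.sqrt (1 - 2 * (2 / t ^ 2) * v₁))⁻¹ := by
      rw [← hexpval₁, ← integral_const_mul]
      exact integral_mono hi₁' (hexpint₁.const_mul _) fun z => hbnd m z
    have hIval₂ : ∫ z, rexp ((-m + z) ^ 2 / t ^ 2) ∂(gaussianReal 0 v₂)
        ≤ rexp (2 * (-m) ^ 2 / t ^ 2) * (Real.sqrt (1 - 2 * (2 / t ^ 2) * v₂))⁻¹ := by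
      rw [← hexpval₂, ← integral_const_mul]
      exact integral_mono hi₂' (hexpint₂.const_mul _) fun z => hbnd (-m) z
    have hm2' : (-m) ^ 2 ≤ σ2 := by rwa [neg_sq]
    -- total
    have hItot : ∫ ω, rexp ((x ⬝ᵥ X ω) ^ 2 / t ^ 2) ∂P ≤ 2 := by
      have hk := key (fun z => rexp (z ^ 2 / t ^ 2)) hFmeas hi₁' hi₂'
      rw [hk]
      have b₁ := hIval₁.trans (sg_final hE1 hE2 hσpos ht2 hm2 v₁.coe_nonneg hv₁σ)
      have b₂ := hIval₂.trans (sg_final hE1 hE2 hσpos ht2 hm2' v₂.coe_nonneg hv₂σ)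
      linarith
    show subGaussianNorm P (fun ω => x ⬝ᵥ X ω) ≤ t
    unfold subGaussianNorm
    apply csInf_le
    · exact ⟨0, fun y hy => hy.1.le⟩
    · exact ⟨htpos, hItot⟩
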